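/- Let R be a ring and let a be a two-sided ideal contained in the Jacobson radical of R. If X is a bounded complex of finitely generated projective R-modules such that X ⊗_R R/a is contractible (i.e., zero in the homotopy category K^b(R/a)), then X is contractible in K^b(R). -/

import Mathlib

open CategoryTheory CategoryTheory.Limits

universe u

section Stmt10Aux

variable {R : Type u} [CommRing R] (a : Ideal R)

/-- The unit map `M → (R/a) ⊗ M` is surjective. -/
theorem stmt10_aux_surj (M : ModuleCat.{u} R) :
    Function.Surjective
      ((ModuleCat.ExtendRestrictScalarsAdj.unit.{u,u,u} (Ideal.Quotient.mk a)).app M) := by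
  intro z
  change TensorProduct R _ _ at z
  induction z using TensorProduct.induction_on with
  | zero => exact ⟨0, map_zero _⟩
  | tmul s m =>
    obtain ⟨r, rfl⟩ := Ideal.Quotient.mk_surjective s
    refine ⟨r • m, ?_⟩
    show (1 : R ⧸ a) ⊗ₜ[R] (r • m) = _
    rw [← TensorProduct.smul_tmul]
    congr 1
    show r • (1 : R ⧸ a) = Ideal.Quotient.mk a r
    change Ideal.Quotient.mk a r * 1 = Ideal.Quotient.mk a r
    rw [mul_one]
  | add x y hx hy =>
    obtain ⟨x', hx'⟩ := hx
    obtain ⟨y', hy'⟩ := hy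
    exact ⟨x' + y', by rw [map_add, hx', hy']; rfl⟩

/-- Auxiliary bilinear-ish map `R →ₗ (M →ₗ M/aM)`. -/
noncomputable def stmt10_gAux (M : ModuleCat.{u} R) :
    R →ₗ[R] (M →ₗ[R] (M ⧸ (a • (⊤ : Submodule R M)))) where
  toFun r := (Submodule.mkQ _).comp (r • (LinearMap.id (R := R) (M := M)))
  map_add' r r' := by ext m; simp [add_smul]
  map_smul' c r := by ext m; simp [mul_smul]

theorem stmt10_aux_ker (M : ModuleCat.{u} R) (x : M)
    (hx : (ModuleCat.ExtendRestrictScalarsAdj.unit.{u,u,u} (Ideal.Quotient.mk a)).app M x = 0) :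
    x ∈ a • (⊤ : Submodule R M) := by
  have hker : a ≤ LinearMap.ker (stmt10_gAux a M) := by
    intro r hr
    rw [LinearMap.mem_ker]
    ext m
    show Submodule.Quotient.mk (r • m) = 0
    rw [Submodule.Quotient.mk_eq_zero]
    exact Submodule.smul_mem_smul hr trivial
  let g0 := Submodule.liftQ a (stmt10_gAux a M) hker
  have hg0 : ∀ r : R, g0 (Ideal.Quotient.mk a r) = stmt10_gAux a M r := by
    intro r
    rfl
  let B : ((ModuleCat.restrictScalars (Ideal.Quotient.mk a)).obj
      (ModuleCat.of (R ⧸ a) (R ⧸ a))) →ₗ[R] (M →ₗ[R] (M ⧸ (a • (⊤ : Submodule R M)))) :=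
    { toFun := g0
      map_add' := g0.map_add
      map_smul' := fun r y => by
        obtain ⟨t, rfl⟩ := Ideal.Quotient.mk_surjective (y : R ⧸ a)
        change g0 (Ideal.Quotient.mk a r * Ideal.Quotient.mk a t)
          = r • g0 (Ideal.Quotient.mk a t)
        rw [← map_mul, hg0, hg0, ← smul_eq_mul, map_smul] }
  let ν := TensorProduct.lift B
  have h3 : ν ((ModuleCat.ExtendRestrictScalarsAdj.unit.{u,u,u}
      (Ideal.Quotient.mk a)).app M x) = Submodule.Quotient.mk x := by
    show ν ((show (ModuleCat.restrictScalars (Ideal.Quotient.mk a)).obj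
      (ModuleCat.of (R ⧸ a) (R ⧸ a)) from (1 : R ⧸ a)) ⊗ₜ[R] x) = _
    rw [TensorProduct.lift.tmul]
    show g0 (1 : R ⧸ a) x = _
    have : (1 : R ⧸ a) = Ideal.Quotient.mk a 1 := (map_one _).symm
    rw [this, hg0]
    show Submodule.Quotient.mk ((1 : R) • x) = _
    rw [one_smul]
  rw [hx] at h3
  exact (Submodule.Quotient.mk_eq_zero _).mp (h3.symm.trans (map_zero ν))

end Stmt10Aux

/-- Let `a` be an ideal contained in the Jacobson radical of `R`, and `X` a bounded complex
of finitely generated projective `R`-modules. If `X ⊗_R R/a` is contractible (zero in the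
homotopy category `K^b(R/a)`), then `X` is contractible in `K^b(R)`. -/
theorem stmt10 {R : Type u} [CommRing R] (a : Ideal R) (ha : a ≤ Ideal.jacobson ⊥)
    (X : CochainComplex (ModuleCat.{u} R) ℤ)
    (hbdd : ∃ m n : ℤ, ∀ i : ℤ, (i < m ∨ n < i) → IsZero (X.X i))
    (hfgproj : ∀ i : ℤ, Module.Finite R (X.X i) ∧ Projective (X.X i))
    (hzero : IsZero
      ((HomotopyCategory.quotient (ModuleCat.{u} (R ⧸ a)) (ComplexShape.up ℤ)).obj
        (((ModuleCat.extendScalars (Ideal.Quotient.mk a) :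
            ModuleCat.{u} R ⥤ ModuleCat.{u} (R ⧸ a)).mapHomologicalComplex
            (ComplexShape.up ℤ)).obj X))) :
    IsZero ((HomotopyCategory.quotient (ModuleCat.{u} R) (ComplexShape.up ℤ)).obj X) := by
  classical
  set f := Ideal.Quotient.mk a with hfdef
  let F : ModuleCat.{u} R ⥤ ModuleCat.{u} (R ⧸ a) := ModuleCat.extendScalars f
  let G : ModuleCat.{u} (R ⧸ a) ⥤ ModuleCat.{u} R := ModuleCat.restrictScalars f
  let Xb := (F.mapHomologicalComplex (ComplexShape.up ℤ)).obj X
  -- a contracting homotopy over R/a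
  have h1 : (HomotopyCategory.quotient (ModuleCat.{u} (R ⧸ a)) (ComplexShape.up ℤ)).map
      (𝟙 Xb) = (HomotopyCategory.quotient (ModuleCat.{u} (R ⧸ a)) (ComplexShape.up ℤ)).map 0 := by
    rw [CategoryTheory.Functor.map_id, Functor.map_zero]
    exact hzero.eq_of_src _ _
  have Hb : Homotopy (𝟙 Xb) (0 : Xb ⟶ Xb) := HomotopyCategory.homotopyOfEq _ _ h1
  -- unit maps
  let p : ∀ i : ℤ, (X.X i ⟶ G.obj (Xb.X i)) := fun i =>
    (ModuleCat.ExtendRestrictScalarsAdj.unit.{u,u,u} f).app (X.X i)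
  have pnat : ∀ i j : ℤ, ∀ x : X.X i, p j (X.d i j x) = G.map (Xb.d i j) (p i x) := by
    intro i j x
    exact ConcreteCategory.congr_hom
      ((ModuleCat.ExtendRestrictScalarsAdj.unit.{u,u,u} f).naturality (X.d i j)) x
  have psurj : ∀ i : ℤ, Function.Surjective (p i) := fun i => stmt10_aux_surj a (X.X i)
  have pker : ∀ (i : ℤ) (x : X.X i), p i x = 0 → x ∈ a • (⊤ : Submodule R (X.X i)) :=
    fun i x hx => stmt10_aux_ker a (X.X i) x hx
  -- homotopy components over R/a, restricted to R
  let kk : ∀ i : ℤ, (G.obj (Xb.X (i + 1)) ⟶ G.obj (Xb.X i)) := fun i =>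
    G.map (Hb.hom (i + 1) i)
  have hcontr : ∀ (i : ℤ) (y : G.obj (Xb.X (i + 1))),
      kk (i + 1) (G.map (Xb.d (i + 1) (i + 1 + 1)) y)
        + G.map (Xb.d i (i + 1)) (kk i y) = y := by
    intro i y
    have c := Hb.comm (i + 1)
    rw [dNext_eq Hb.hom (show (ComplexShape.up ℤ).Rel (i + 1) (i + 1 + 1) from rfl),
        prevD_eq Hb.hom (show (ComplexShape.up ℤ).Rel i (i + 1) from rfl)] at c
    have c2 := LinearMap.congr_fun (congr_arg ModuleCat.Hom.hom c) y
    simp only [HomologicalComplex.id_f, HomologicalComplex.zero_f_apply,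
      LinearMap.add_apply, ModuleCat.hom_add, ModuleCat.hom_comp, ModuleCat.hom_id,
      LinearMap.comp_apply, LinearMap.id_apply, HomologicalComplex.zero_f, ModuleCat.hom_zero,
      LinearMap.zero_apply, add_zero] at c2
    exact (by exact c2.symm)
  -- projectivity and finiteness
  have hproj : ∀ i : ℤ, Module.Projective R (X.X i) := fun i =>
    (IsProjective.iff_projective (X.X i)).mpr (hfgproj i).2
  -- lift the homotopy
  have lifts : ∀ i : ℤ, ∃ s : X.X (i + 1) →ₗ[R] X.X i,
      (p i).hom.comp s = (kk i).hom.comp (p (i + 1)).hom := by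
    intro i
    haveI := hproj i
    haveI := hproj (i + 1)
    exact Module.projective_lifting_property (p i).hom ((kk i).hom.comp (p (i + 1)).hom) (psurj i)
  choose s hs using lifts
  -- the endomorphism φ = d∘s + s∘d, congruent to identity mod a
  let φ : ∀ i : ℤ, X.X (i + 1) →ₗ[R] X.X (i + 1) := fun i =>
    (s (i + 1)).comp (X.d (i + 1) (i + 1 + 1)).hom + (X.d i (i + 1)).hom.comp (s i)
  have hφp : ∀ (i : ℤ) (x : X.X (i + 1)), p (i + 1) (φ i x) = p (i + 1) x := by
    intro i x
    have h1' : p (i + 1) (s (i + 1) (X.d (i + 1) (i + 1 + 1) x)) =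
        kk (i + 1) (p (i + 1 + 1) (X.d (i + 1) (i + 1 + 1) x)) :=
      LinearMap.congr_fun (hs (i + 1)) _
    have h2' : p i (s i x) = kk i (p (i + 1) x) := LinearMap.congr_fun (hs i) x
    have : p (i + 1) (φ i x) = p (i + 1) (s (i + 1) (X.d (i + 1) (i + 1 + 1) x))
        + p (i + 1) (X.d i (i + 1) (s i x)) := by
      show p (i+1) (s (i + 1) (X.d (i + 1) (i + 1 + 1) x) + X.d i (i + 1) (s i x)) = _
      rw [map_add]
    rw [this, h1', pnat (i + 1) (i + 1 + 1) x, pnat i (i + 1) (s i x), h2']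
    exact hcontr i (p (i + 1) x)
  have hmod : ∀ (i : ℤ) (x : X.X (i + 1)),
      x - φ i x ∈ a • (⊤ : Submodule R (X.X (i + 1))) := by
    intro i x
    apply pker
    rw [map_sub, hφp]
    exact sub_self _
  -- Nakayama: φ is surjective, hence bijective
  have hrange : ∀ i : ℤ, (⊤ : Submodule R (X.X (i + 1))) ≤
      LinearMap.range (φ i) ⊔ a • (⊤ : Submodule R (X.X (i + 1))) := by
    intro i x _
    refine Submodule.mem_sup.mpr ⟨φ i x, LinearMap.mem_range_self _ _, x - φ i x, hmod i x, ?_⟩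
    abel
  have hsurjφ : ∀ i : ℤ, Function.Surjective (φ i) := by
    intro i
    haveI : Module.Finite R (X.X (i + 1)) := (hfgproj (i + 1)).1
    have hle : a • (⊤ : Submodule R (X.X (i + 1))) ≤ LinearMap.range (φ i) :=
      Submodule.smul_le_of_le_smul_of_le_jacobson_bot
        (Module.finite_def.mp inferInstance) ha (hrange i)
    have : LinearMap.range (φ i) = ⊤ :=
      top_unique ((hrange i).trans (sup_le le_rfl hle))
    exact LinearMap.range_eq_top.mp this
  have hbij : ∀ i : ℤ, Function.Bijective (φ i) := by
    intro i
    haveI : Module.Finite R (X.X (i + 1)) := (hfgproj (i + 1)).1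
    exact OrzechProperty.bijective_of_surjective_endomorphism (φ i) (hsurjφ i)
  let e : ∀ i : ℤ, (X.X (i + 1) ≃ₗ[R] X.X (i + 1)) := fun i =>
    LinearEquiv.ofBijective (φ i) (hbij i)
  -- φ commutes with the differential
  have hcomm : ∀ (i : ℤ) (x : X.X (i + 1)),
      φ (i + 1) (X.d (i + 1) (i + 1 + 1) x) = X.d (i + 1) (i + 1 + 1) (φ i x) := by
    intro i x
    show s (i + 1 + 1) (X.d (i + 1 + 1) (i + 1 + 1 + 1) (X.d (i + 1) (i + 1 + 1) x))
        + X.d (i + 1) (i + 1 + 1) (s (i + 1) (X.d (i + 1) (i + 1 + 1) x)) = _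
    have hdd : X.d (i + 1 + 1) (i + 1 + 1 + 1) (X.d (i + 1) (i + 1 + 1) x) = 0 :=
      ConcreteCategory.congr_hom (X.d_comp_d (i + 1) (i + 1 + 1) (i + 1 + 1 + 1)) x
    rw [hdd, map_zero, zero_add]
    show _ = X.d (i + 1) (i + 1 + 1)
      (s (i + 1) (X.d (i + 1) (i + 1 + 1) x) + X.d i (i + 1) (s i x))
    rw [map_add]
    have hdd2 : X.d (i + 1) (i + 1 + 1) (X.d i (i + 1) (s i x)) = 0 :=
      ConcreteCategory.congr_hom (X.d_comp_d i (i + 1) (i + 1 + 1)) (s i x)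
    rw [hdd2, add_zero]
  have hinv : ∀ (i : ℤ) (x : X.X (i + 1)),
      (e (i + 1)).symm (X.d (i + 1) (i + 1 + 1) x)
        = X.d (i + 1) (i + 1 + 1) ((e i).symm x) := by
    intro i x
    apply (e (i + 1)).injective
    rw [LinearEquiv.apply_symm_apply]
    show X.d (i + 1) (i + 1 + 1) x = φ (i + 1) (X.d (i + 1) (i + 1 + 1) ((e i).symm x))
    rw [hcomm i ((e i).symm x)]
    congr 1
    exact (LinearEquiv.apply_symm_apply (e i) x).symm ▸ rfl
  -- the corrected homotopy
  let s' : ∀ i : ℤ, (X.X (i + 1) ⟶ X.X i) := fun i =>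
    ModuleCat.ofHom ((s i).comp ((e i).symm : X.X (i + 1) →ₗ[R] X.X (i + 1)))
  have hfinal : ∀ (i : ℤ) (x : X.X (i + 1)),
      s' (i + 1) (X.d (i + 1) (i + 1 + 1) x) + X.d i (i + 1) (s' i x) = x := by
    intro i x
    show s (i + 1) ((e (i + 1)).symm (X.d (i + 1) (i + 1 + 1) x))
      + X.d i (i + 1) (s i ((e i).symm x)) = x
    rw [hinv i x]
    have : s (i + 1) (X.d (i + 1) (i + 1 + 1) ((e i).symm x))
        + X.d i (i + 1) (s i ((e i).symm x)) = φ i ((e i).symm x) := rfl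
    rw [this]
    exact (e i).apply_symm_apply x
  -- assemble the homotopy
  let ph : ∀ i j : ℤ, (ComplexShape.up ℤ).Rel j i → (X.X i ⟶ X.X j) := fun i j hij =>
    (eqToHom (congrArg X.X (show i = j + 1 from hij.symm)) : X.X i ⟶ X.X (j + 1)) ≫ s' j
  have key : ∀ (j i : ℤ) (hij : (ComplexShape.up ℤ).Rel j i),
      X.d i (i + 1) ≫ ph (i + 1) i (show (ComplexShape.up ℤ).Rel i (i + 1) from rfl)
        + ph i j hij ≫ X.d j i = 𝟙 (X.X i) := by
    intro j i hij
    have hij' : j + 1 = i := hij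
    subst hij'
    show X.d (j + 1) (j + 1 + 1) ≫ (eqToHom _ ≫ s' (j + 1))
        + (eqToHom _ ≫ s' j) ≫ X.d j (j + 1) = 𝟙 (X.X (j + 1))
    rw [eqToHom_refl, eqToHom_refl, Category.id_comp, Category.id_comp]
    apply ModuleCat.hom_ext
    apply LinearMap.ext
    intro x
    have := hfinal j x
    simpa [ModuleCat.hom_comp] using this
  have heq : Homotopy.nullHomotopicMap' ph = 𝟙 X := by
    refine HomologicalComplex.hom_ext _ _ (fun i => ?_)
    rw [Homotopy.nullHomotopicMap'_f
      (show (ComplexShape.up ℤ).Rel (i - 1) i by simp) 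
      (show (ComplexShape.up ℤ).Rel i (i + 1) from rfl) ph,
      HomologicalComplex.id_f]
    exact key (i - 1) i (by simp)
  have Hfin : Homotopy (𝟙 X) (0 : X ⟶ X) :=
    (Homotopy.ofEq heq.symm).trans (Homotopy.nullHomotopy' ph)
  rw [IsZero.iff_id_eq_zero]
  rw [← CategoryTheory.Functor.map_id (HomotopyCategory.quotient (ModuleCat.{u} R)
    (ComplexShape.up ℤ)) X]
  rw [HomotopyCategory.eq_of_homotopy _ _ Hfin]
  exact Functor.map_zero _ _ _
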